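/- Decision-list characterization: let M = (f, p) be an incentive-compatible, individually rational, and nonbossy mechanism in a single-parameter environment with feasible outcome set 𝒪 ⊆ {0,1}ⁿ of size k. Then there exist a payment vector q(o) ∈ (ℝ≥0)ⁿ for each o ∈ 𝒪 with qᵢ(o) = 0 whenever oᵢ = 0, an exception list E(o) ⊆ 𝒪 for each o ∈ 𝒪, and an enumeration o⁽¹⁾, …, o⁽ᵏ⁾ of 𝒪, such that for every v ∈ (ℝ≥0)ⁿ, f(v) = o⁽ʲ⁾ and p(v) = q(o⁽ʲ⁾), where j = min{ j' ∈ [k] : v satisfies o⁽ʲ'⁾ and v does not satisfy any o ∈ E(o⁽ʲ'⁾) }. Moreover, the exception lists can be chosen so that the order does not matter: for every v there is exactly one index j' ∈ [k] such that v satisfies o⁽ʲ'⁾ and v satisfies no outcome in E(o⁽ʲ'⁾). -/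

import Mathlib

/-! Statement 12: decision-list characterization of IC, IR, nonbossy mechanisms in single-parameter environments. -/

open Function NNReal

/-- Quasilinear utility of agent `i` with value `vi`, allocation `S` (agent `i`
receives an item iff `i ∈ S`) and payment `qi`. -/
noncomputable def utility {n : ℕ} (vi : ℝ≥0) (i : Fin n) (S : Finset (Fin n))
    (qi : ℝ≥0) : ℝ :=
  (if i ∈ S then (vi : ℝ) else 0) - (qi : ℝ)

/-- Incentive-compatibility in a single-parameter environment, where ties are
broken in favor of receiving an item. -/
def SPIC {n : ℕ} (f : (Fin n → ℝ≥0) → Finset (Fin n))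
    (p : (Fin n → ℝ≥0) → Fin n → ℝ≥0) : Prop :=
  ∀ (v : Fin n → ℝ≥0) (i : Fin n) (x : ℝ≥0),
    utility (v i) i (f v) (p v i) >
      utility (v i) i (f (update v i x)) (p (update v i x) i) ∨
    (utility (v i) i (f v) (p v i) =
      utility (v i) i (f (update v i x)) (p (update v i x) i) ∧
      (i ∈ f (update v i x) → i ∈ f v))

/-- Individual rationality. -/
def SPIR {n : ℕ} (f : (Fin n → ℝ≥0) → Finset (Fin n))
    (p : (Fin n → ℝ≥0) → Fin n → ℝ≥0) : Prop :=
  ∀ (v : Fin n → ℝ≥0) (i : Fin n), 0 ≤ utility (v i) i (f v) (p v i)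

/-- Nonbossiness: no agent can change the outcome or payments of others without
changing their own allocation or payment. -/
def SPNB {n : ℕ} (f : (Fin n → ℝ≥0) → Finset (Fin n))
    (p : (Fin n → ℝ≥0) → Fin n → ℝ≥0) : Prop :=
  ∀ (v : Fin n → ℝ≥0) (i : Fin n) (x : ℝ≥0),
    (i ∈ f v ↔ i ∈ f (update v i x)) → p v i = p (update v i x) i →
    f v = f (update v i x) ∧ p v = p (update v i x)

/-- A valuation vector `v` satisfies an outcome with associated payment vector
`q` if every agent's value is at least their payment. -/
def Sat {n : ℕ} (v : Fin n → ℝ≥0) (q : Fin n → ℝ≥0) : Prop := ∀ i, q i ≤ v i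

section Aux

variable {n : ℕ} {f : (Fin n → ℝ≥0) → Finset (Fin n)} {p : (Fin n → ℝ≥0) → Fin n → ℝ≥0}

lemma ic_le (hIC : SPIC f p) (v : Fin n → ℝ≥0) (i : Fin n) (x : ℝ≥0) :
    utility (v i) i (f (update v i x)) (p (update v i x) i) ≤
      utility (v i) i (f v) (p v i) := by
  rcases hIC v i x with h | h
  · exact h.le
  · exact h.1.ge

lemma ir_loser (hIR : SPIR f p) {v : Fin n → ℝ≥0} {i : Fin n} (h : i ∉ f v) : p v i = 0 := by
  have h1 : (0:ℝ) ≤ 0 - (p v i : ℝ) := by simpa [utility, h] using hIR v i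
  have h2 : (p v i : ℝ) ≤ 0 := by linarith
  exact le_antisymm (by exact_mod_cast h2) (zero_le)

lemma ir_winner (hIR : SPIR f p) {v : Fin n → ℝ≥0} {i : Fin n} (h : i ∈ f v) :
    p v i ≤ v i := by
  have h1 : (0:ℝ) ≤ (v i : ℝ) - (p v i : ℝ) := by simpa [utility, h] using hIR v i
  exact_mod_cast (by linarith : (p v i : ℝ) ≤ v i)

lemma step_lose (hIC : SPIC f p) (hIR : SPIR f p) {w : Fin n → ℝ≥0} {j : Fin n} {x : ℝ≥0}
    (h : j ∉ f w) (hx : x ≤ w j) :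
    j ∉ f (update w j x) ∧ p (update w j x) j = 0 := by
  have hj' : j ∉ f (update w j x) := by
    intro hj'
    have hp0 : p w j = 0 := ir_loser hIR h
    have hpw' : p (update w j x) j ≤ x := by
      have := ir_winner hIR hj'
      simpa using this
    rcases hIC w j x with hgt | ⟨heq, htie⟩
    · have h1 : utility (w j) j (f w) (p w j) = 0 := by simp [utility, h, hp0]
      have h2 : utility (w j) j (f (update w j x)) (p (update w j x) j)
          = (w j : ℝ) - p (update w j x) j := by simp [utility, hj']
      have h3 : (p (update w j x) j : ℝ) ≤ w j := by
        have hx' : (x : ℝ) ≤ w j := by exact_mod_cast hx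
        have : (p (update w j x) j : ℝ) ≤ x := by exact_mod_cast hpw'
        linarith
      rw [h1, h2] at hgt
      linarith
    · exact h (htie hj')
  exact ⟨hj', ir_loser hIR hj'⟩

lemma step_win (hIC : SPIC f p) (hIR : SPIR f p) {w : Fin n → ℝ≥0} {j : Fin n} {x : ℝ≥0}
    (h : j ∈ f w) (hx : p w j ≤ x) :
    j ∈ f (update w j x) ∧ p (update w j x) j = p w j := by
  set w' := update w j x with hw'
  have hupd : update w' j (w j) = w := by
    rw [hw', Function.update_idem, Function.update_eq_self]
  have hxj : w' j = x := by rw [hw']; simp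
  have hj' : j ∈ f w' := by
    by_contra hj'
    have hp0 : p w' j = 0 := ir_loser hIR hj'
    rcases hIC w' j (w j) with hgt | ⟨heq, htie⟩
    · rw [hupd] at hgt
      have h1 : utility (w' j) j (f w') (p w' j) = 0 := by simp [utility, hj', hp0]
      have h2 : utility (w' j) j (f w) (p w j) = (x:ℝ) - p w j := by
        simp [utility, h, hxj]
      rw [h1, h2] at hgt
      have : (p w j : ℝ) ≤ x := by exact_mod_cast hx
      linarith
    · rw [hupd] at htie
      exact hj' (htie h)
  have hle1 := ic_le hIC w j x
  have hle2 := ic_le hIC w' j (w j)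
  rw [hupd] at hle2
  have e1 : utility (w j) j (f w) (p w j) = (w j : ℝ) - p w j := by simp [utility, h]
  have e2 : utility (w j) j (f w') (p w' j) = (w j : ℝ) - p w' j := by simp [utility, hj']
  have e3 : utility (w' j) j (f w') (p w' j) = (w' j : ℝ) - p w' j := by simp [utility, hj']
  have e4 : utility (w' j) j (f w) (p w j) = (w' j : ℝ) - p w j := by simp [utility, h]
  rw [e1, e2] at hle1
  rw [e3, e4] at hle2
  have : (p w' j : ℝ) = p w j := le_antisymm (by linarith) (by linarith)
  exact ⟨hj', by exact_mod_cast this⟩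

lemma step_both (hIC : SPIC f p) (hIR : SPIR f p) (hNB : SPNB f p)
    {w : Fin n → ℝ≥0} {j : Fin n} {x : ℝ≥0}
    (h1 : j ∈ f w → p w j ≤ x) (h2 : j ∉ f w → x ≤ w j) :
    f (update w j x) = f w ∧ p (update w j x) = p w := by
  by_cases h : j ∈ f w
  · obtain ⟨hj', hp⟩ := step_win hIC hIR h (h1 h)
    obtain ⟨hf, hp'⟩ := hNB w j x (iff_of_true h hj') hp.symm
    exact ⟨hf.symm, hp'.symm⟩
  · obtain ⟨hj', hp⟩ := step_lose hIC hIR h (h2 h)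
    have hp0 : p w j = 0 := ir_loser hIR h
    obtain ⟨hf, hp'⟩ := hNB w j x (iff_of_false h hj') (by rw [hp0, hp])
    exact ⟨hf.symm, hp'.symm⟩

/-- Key move lemma: raising winners (keeping them at or above their payment)
and lowering (or keeping) losers changes neither outcome nor payments. -/
lemma monotone_move (hIC : SPIC f p) (hIR : SPIR f p) (hNB : SPNB f p)
    (v r : Fin n → ℝ≥0)
    (h1 : ∀ i ∈ f v, p v i ≤ r i) (h2 : ∀ i ∉ f v, r i ≤ v i) :
    f r = f v ∧ p r = p v := by
  classical
  have key : ∀ A : Finset (Fin n),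
      f (fun i => if i ∈ A then r i else v i) = f v ∧
      p (fun i => if i ∈ A then r i else v i) = p v := by
    intro A
    induction A using Finset.induction_on with
    | empty => simp
    | @insert j A hjA ih =>
      have heq : (fun i => if i ∈ insert j A then r i else v i)
          = update (fun i => if i ∈ A then r i else v i) j (r j) := by
        funext i
        by_cases hij : i = j
        · subst hij; simp
        · simp [Function.update_of_ne hij, Finset.mem_insert, hij]
      rw [heq]
      have hA1 : j ∈ f (fun i => if i ∈ A then r i else v i) →
          p (fun i => if i ∈ A then r i else v i) j ≤ r j := by
        intro hjw
        rw [ih.1] at hjw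
        calc p (fun i => if i ∈ A then r i else v i) j = p v j := congrFun ih.2 j
          _ ≤ r j := h1 j hjw
      have hA2 : j ∉ f (fun i => if i ∈ A then r i else v i) →
          r j ≤ (fun i => if i ∈ A then r i else v i) j := by
        intro hjw
        rw [ih.1] at hjw
        simpa [hjA] using h2 j hjw
      have hstep := step_both hIC hIR hNB hA1 hA2
      exact ⟨hstep.1.trans ih.1, hstep.2.trans ih.2⟩
  have hU := key Finset.univ
  simpa using hU

end Aux

/-- Decision-list characterization: an IC, IR, nonbossy mechanism in a
single-parameter environment with feasible outcomes `Feas` (of size `k`) is a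
decision list: there are payment vectors `q o` (zero on agents not served by
`o`), exception lists `E o ⊆ Feas`, and an enumeration `o⁽¹⁾, …, o⁽ᵏ⁾` of `Feas`
such that for every `v`, the mechanism outputs the first outcome `o⁽ʲ⁾` that `v`
satisfies whose exception list contains no outcome satisfied by `v`, charging
`q (o⁽ʲ⁾)`; moreover the exception lists can be chosen so that the order is
irrelevant, i.e. exactly one index meets this condition. -/
theorem decisionList_characterization (n : ℕ) (Feas : Finset (Finset (Fin n)))
    (f : (Fin n → ℝ≥0) → Finset (Fin n)) (p : (Fin n → ℝ≥0) → Fin n → ℝ≥0)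
    (hfeas : ∀ v, f v ∈ Feas)
    (hIC : SPIC f p) (hIR : SPIR f p) (hNB : SPNB f p) :
    ∃ (q : Finset (Fin n) → Fin n → ℝ≥0)
      (E : Finset (Fin n) → Finset (Finset (Fin n)))
      (o : Fin Feas.card → Finset (Fin n)),
      -- losers pay nothing
      (∀ S : Finset (Fin n), ∀ i, i ∉ S → q S i = 0) ∧
      -- exception lists consist of feasible outcomes
      (∀ S : Finset (Fin n), E S ⊆ Feas) ∧
      -- `o` enumerates the feasible outcomes
      (∀ j, o j ∈ Feas) ∧ Function.Injective o ∧
      -- the mechanism agrees with the decision list, and exactly one entry of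
      -- the list fires (so the order of the list does not matter)
      (∀ v : Fin n → ℝ≥0, ∃ j : Fin Feas.card,
        (Sat v (q (o j)) ∧ ∀ S ∈ E (o j), ¬ Sat v (q S)) ∧
        (∀ j' : Fin Feas.card,
          (Sat v (q (o j')) ∧ ∀ S ∈ E (o j'), ¬ Sat v (q S)) → j' = j) ∧
        f v = o j ∧ p v = q (o j)) := by
  
  classical
  -- payments factor through the outcome
  have hApay : ∀ v w : Fin n → ℝ≥0, f v = f w → p v = p w := by
    intro v w hvw
    have H1 := monotone_move hIC hIR hNB v (fun i => p v i ⊔ p w i)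
      (fun i _ => le_sup_left)
      (fun i hi => sup_le (by simp [ir_loser hIR hi])
        (by simp [ir_loser hIR (show i ∉ f w by rw [← hvw]; exact hi)]))
    have H2 := monotone_move hIC hIR hNB w (fun i => p v i ⊔ p w i)
      (fun i _ => le_sup_right)
      (fun i hi => sup_le (by simp [ir_loser hIR (show i ∉ f v by rw [hvw]; exact hi)])
        (by simp [ir_loser hIR hi]))
    exact H1.2.symm.trans H2.2
  have hSat : ∀ v : Fin n → ℝ≥0, Sat v (p v) := by
    intro v i
    by_cases h : i ∈ f v
    · exact ir_winner hIR h
    · simp [ir_loser hIR h]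
  -- key cross lemma
  have hKey : ∀ v w : Fin n → ℝ≥0, Sat v (p w) → Sat w (p v) → f v = f w := by
    intro v w hvw hwv
    have H1 := monotone_move hIC hIR hNB v (fun i => p v i ⊔ p w i)
      (fun i _ => le_sup_left)
      (fun i hi => sup_le (by simp [ir_loser hIR hi]) (hvw i))
    have H2 := monotone_move hIC hIR hNB w (fun i => p v i ⊔ p w i)
      (fun i _ => le_sup_right)
      (fun i hi => sup_le (hwv i) (by simp [ir_loser hIR hi]))
    exact H1.1.symm.trans H2.1
  set q : Finset (Fin n) → Fin n → ℝ≥0 :=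
    fun S => if h : ∃ v, f v = S then p h.choose else 0 with hq
  have hqf : ∀ v, q (f v) = p v := by
    intro v
    have h : ∃ w, f w = f v := ⟨v, rfl⟩
    have hc : f h.choose = f v := h.choose_spec
    simp only [hq, dif_pos h]
    exact hApay _ _ hc
  set E : Finset (Fin n) → Finset (Finset (Fin n)) :=
    fun S => Feas.filter (fun T => T ≠ S ∧ ∃ w, Sat w (q S) ∧ f w = T) with hE
  set o : Fin Feas.card → Finset (Fin n) :=
    fun j => ((Feas.equivFin.symm j : Feas) : Finset (Fin n)) with hoo
  refine ⟨q, E, o, ?_, ?_, ?_, ?_, ?_⟩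
  · -- losers pay nothing
    intro S i hi
    by_cases h : ∃ v, f v = S
    · have hc : f h.choose = S := h.choose_spec
      simp only [hq, dif_pos h]
      exact ir_loser hIR (by rw [hc]; exact hi)
    · simp [hq, dif_neg h]
  · intro S
    rw [hE]
    exact Finset.filter_subset _ _
  · intro j
    exact (Feas.equivFin.symm j).2
  · intro j j' hjj'
    rw [hoo] at hjj'
    exact Feas.equivFin.symm.injective (Subtype.ext hjj')
  · intro v
    have hv : f v ∈ Feas := hfeas v
    refine ⟨Feas.equivFin ⟨f v, hv⟩, ?_⟩
    have ho : o (Feas.equivFin ⟨f v, hv⟩) = f v := by rw [hoo]; simp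
    refine ⟨⟨?_, ?_⟩, ?_, ho.symm, ?_⟩
    · rw [ho, hqf]
      exact hSat v
    · rw [ho]
      intro T hT hsatT
      rw [hE] at hT
      simp only [Finset.mem_filter] at hT
      obtain ⟨hTF, hTne, w, hw1, hw2⟩ := hT
      rw [hqf] at hw1
      rw [← hw2, hqf] at hsatT
      exact hTne (((hKey v w hsatT hw1).trans hw2).symm)
    · intro j' hj'
      obtain ⟨hsat', hexc'⟩ := hj'
      have hfv : f v = o j' := by
        by_contra hne
        refine hexc' (f v) ?_ (by rw [hqf]; exact hSat v)
        rw [hE]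
        simp only [Finset.mem_filter]
        exact ⟨hv, hne, v, hsat', rfl⟩
      rw [hoo] at hfv
      have hsub : Feas.equivFin.symm j' = ⟨f v, hv⟩ := Subtype.ext hfv.symm
      calc j' = Feas.equivFin (Feas.equivFin.symm j') := (Equiv.apply_symm_apply _ _).symm
        _ = Feas.equivFin ⟨f v, hv⟩ := by rw [hsub]
    · rw [ho, hqf]
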